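/- For the one-cuspon solution with U = Λ/h₀ > 1, one has X_y = (U²-1)sinh²Ω/(√u₀[U² + (U²-1)sinh²Ω]), and the profile slope u_X = (∂u/∂y)/X_y equals -U³(u₀ - 1/(2λ₁²))·coth Ω/(U² + (U²-1)sinh²Ω); in particular, if u₀ > 1/(2λ₁²) then u_X → +∞ as Ω → 0⁻ and u_X → -∞ as Ω → 0⁺. -/

import Mathlib

open Filter Topology

/-- Real hyperbolic cotangent. -/
noncomputable def rcoth (z : ℝ) : ℝ := Real.cosh z / Real.sinh z

lemma aux_pos {U : ℝ} (hU : 1 ≤ U) (z : ℝ) :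
    0 < U * Real.cosh z - Real.sinh z ∧ 0 < U * Real.cosh z + Real.sinh z := by
  have h1 := Real.cosh_sq z
  have h2 := Real.cosh_pos z
  constructor <;>
    nlinarith [sq_nonneg (Real.cosh z - Real.sinh z), sq_nonneg (Real.cosh z + Real.sinh z)]

lemma D_pos {U : ℝ} (hU : 1 ≤ U) (z : ℝ) :
    0 < U ^ 2 + (U ^ 2 - 1) * Real.sinh z ^ 2 := by
  have h1 : 1 ≤ U ^ 2 := by nlinarith
  nlinarith [mul_nonneg (by nlinarith : (0:ℝ) ≤ U ^ 2 - 1) (sq_nonneg (Real.sinh z))]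

lemma hasDerivAt_phi {U : ℝ} (hU : 1 ≤ U) (z : ℝ) :
    HasDerivAt (fun z => Real.log (U * Real.cosh z - Real.sinh z)
        - Real.log (U * Real.cosh z + Real.sinh z))
      (-2 * U / (U ^ 2 + (U ^ 2 - 1) * Real.sinh z ^ 2)) z := by
  obtain ⟨hp, hq⟩ := aux_pos hU z
  have h1 : HasDerivAt (fun z => U * Real.cosh z - Real.sinh z)
      (U * Real.sinh z - Real.cosh z) z :=
    ((Real.hasDerivAt_cosh z).const_mul U).sub (Real.hasDerivAt_sinh z)
  have h2 : HasDerivAt (fun z => U * Real.cosh z + Real.sinh z)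
      (U * Real.sinh z + Real.cosh z) z :=
    ((Real.hasDerivAt_cosh z).const_mul U).add (Real.hasDerivAt_sinh z)
  have h := (h1.log hp.ne').sub (h2.log hq.ne')
  refine h.congr_deriv ?_
  have hc := Real.cosh_sq z
  have hD := D_pos hU z
  symm
  rw [div_sub_div _ _ hp.ne' hq.ne', div_eq_div_iff hD.ne' (mul_pos hp hq).ne']
  linear_combination (-2*U*(U^2+(U^2-1)*Real.sinh z^2) + 2*U^3
    + (-4*U + 4*U^3)*Real.sinh z^2) * hc

lemma log_abs_ratio {U : ℝ} (hU : 1 ≤ U) {z : ℝ} (hz : z ≠ 0) :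
    Real.log |(U * rcoth z - 1) / (U * rcoth z + 1)| =
      Real.log (U * Real.cosh z - Real.sinh z) - Real.log (U * Real.cosh z + Real.sinh z) := by
  obtain ⟨hp, hq⟩ := aux_pos hU z
  have hs : Real.sinh z ≠ 0 := Real.sinh_ne_zero.mpr hz
  have h1 : U * rcoth z - 1 = (U * Real.cosh z - Real.sinh z) / Real.sinh z := by
    rw [rcoth]; field_simp
  have h2 : U * rcoth z + 1 = (U * Real.cosh z + Real.sinh z) / Real.sinh z := by
    rw [rcoth]; field_simp
  rw [h1, h2, div_div_div_comm, div_self hs, div_one,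
    abs_of_pos (div_pos hp hq), Real.log_div hp.ne' hq.ne']

lemma hasDerivAt_psi {U : ℝ} (hU : 1 ≤ U) (A : ℝ) (z : ℝ) :
    HasDerivAt (fun z => A / (U ^ 2 + (U ^ 2 - 1) * Real.sinh z ^ 2))
      (-(A * ((U ^ 2 - 1) * (2 * Real.sinh z * Real.cosh z)))
        / (U ^ 2 + (U ^ 2 - 1) * Real.sinh z ^ 2) ^ 2) z := by
  have hs2 : HasDerivAt (fun z => Real.sinh z ^ 2) (2 * Real.sinh z * Real.cosh z) z := by
    simpa using (Real.hasDerivAt_sinh z).fun_pow 2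
  have hDen : HasDerivAt (fun z => U ^ 2 + (U ^ 2 - 1) * Real.sinh z ^ 2)
      ((U ^ 2 - 1) * (2 * Real.sinh z * Real.cosh z)) z :=
    (hs2.const_mul (U ^ 2 - 1)).const_add (U ^ 2)
  have h := (hasDerivAt_const z A).div hDen (D_pos hU z).ne'
  refine h.congr_deriv ?_
  ring

lemma tendsto_slope_left {U K : ℝ} (hU : 1 ≤ U) (hK : K < 0) :
    Tendsto (fun z => K * rcoth z / (U ^ 2 + (U ^ 2 - 1) * Real.sinh z ^ 2))
      (𝓝[<] (0 : ℝ)) atTop := by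
  have hh : Tendsto (fun z => -(Real.sinh z * (U ^ 2 + (U ^ 2 - 1) * Real.sinh z ^ 2)))
      (𝓝[<] (0 : ℝ)) (𝓝[>] (0 : ℝ)) := by
    rw [tendsto_nhdsWithin_iff]
    constructor
    · have hc : Continuous fun z : ℝ =>
        -(Real.sinh z * (U ^ 2 + (U ^ 2 - 1) * Real.sinh z ^ 2)) := by continuity
      simpa using (hc.tendsto 0).mono_left (nhdsWithin_le_nhds (s := Set.Iio (0:ℝ)))
    · filter_upwards [self_mem_nhdsWithin] with z hz
      have hs : Real.sinh z < 0 := Real.sinh_neg_iff.mpr hz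
      exact Set.mem_Ioi.mpr (by nlinarith [D_pos hU z])
  have hinv : Tendsto (fun z => (-(Real.sinh z * (U ^ 2 + (U ^ 2 - 1) * Real.sinh z ^ 2)))⁻¹)
      (𝓝[<] (0 : ℝ)) atTop := tendsto_inv_nhdsGT_zero.comp hh
  have hg : Tendsto (fun z => -(K * Real.cosh z)) (𝓝[<] (0 : ℝ)) (𝓝 (-K)) := by
    have hc : Continuous fun z : ℝ => -(K * Real.cosh z) := by continuity
    simpa using (hc.tendsto 0).mono_left (nhdsWithin_le_nhds (s := Set.Iio (0:ℝ)))
  have := Filter.Tendsto.pos_mul_atTop (by linarith : (0:ℝ) < -K) hg hinv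
  refine this.congr fun z => ?_
  rw [rcoth]
  field_simp

lemma tendsto_slope_right {U K : ℝ} (hU : 1 ≤ U) (hK : K < 0) :
    Tendsto (fun z => K * rcoth z / (U ^ 2 + (U ^ 2 - 1) * Real.sinh z ^ 2))
      (𝓝[>] (0 : ℝ)) atBot := by
  have hh : Tendsto (fun z => Real.sinh z * (U ^ 2 + (U ^ 2 - 1) * Real.sinh z ^ 2))
      (𝓝[>] (0 : ℝ)) (𝓝[>] (0 : ℝ)) := by
    rw [tendsto_nhdsWithin_iff]
    constructor
    · have hc : Continuous fun z : ℝ =>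
        Real.sinh z * (U ^ 2 + (U ^ 2 - 1) * Real.sinh z ^ 2) := by continuity
      simpa using (hc.tendsto 0).mono_left (nhdsWithin_le_nhds (s := Set.Ioi (0:ℝ)))
    · filter_upwards [self_mem_nhdsWithin] with z hz
      have hs : 0 < Real.sinh z := Real.sinh_pos_iff.mpr hz
      exact Set.mem_Ioi.mpr (by nlinarith [D_pos hU z])
  have hinv : Tendsto (fun z => (Real.sinh z * (U ^ 2 + (U ^ 2 - 1) * Real.sinh z ^ 2))⁻¹)
      (𝓝[>] (0 : ℝ)) atTop := tendsto_inv_nhdsGT_zero.comp hh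
  have hg : Tendsto (fun z => K * Real.cosh z) (𝓝[>] (0 : ℝ)) (𝓝 K) := by
    have hc : Continuous fun z : ℝ => K * Real.cosh z := by continuity
    simpa using (hc.tendsto 0).mono_left (nhdsWithin_le_nhds (s := Set.Ioi (0:ℝ)))
  have := Filter.Tendsto.neg_mul_atTop hK hg hinv
  refine this.congr fun z => ?_
  rw [rcoth]
  field_simp

/-- for the one-cuspon solution,
`X_y = (U²-1)sinh²Ω/(√u₀[U² + (U²-1)sinh²Ω])`, the slope
`u_X = (∂u/∂y)/X_y = -U³(u₀ - 1/(2λ₁²)) coth Ω/(U² + (U²-1)sinh²Ω)`, and if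
`u₀ > 1/(2λ₁²)` then `u_X → +∞` as `Ω → 0⁻` and `u_X → -∞` as `Ω → 0⁺`. -/
theorem one_cuspon_slope
    (u₀ lam₁ h₀ Λ U : ℝ) (hu₀ : 0 < u₀) (hlam₁ : lam₁ ≠ 0)
    (hh₀ : h₀ = 1 / (2 * Real.sqrt u₀))
    (hΛ : Λ = Real.sqrt (h₀ ^ 2 + lam₁ ^ 2))
    (hU : U = Λ / h₀)
    (Ω : ℝ → ℝ → ℝ)
    (hΩ : ∀ y t, Ω y t = Λ * (y - (1 / (2 * h₀)) * (u₀ - 1 / (2 * lam₁ ^ 2)) * t))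
    (X : ℝ → ℝ → ℝ)
    (hX : ∀ y t, X y t = y / Real.sqrt u₀ + u₀ * t
      + Real.log |(U * rcoth (Ω y t) - 1) / (U * rcoth (Ω y t) + 1)|)
    (uf : ℝ → ℝ → ℝ)
    (huf : ∀ y t, uf y t = deriv (fun t => X y t) t)
    (uX : ℝ → ℝ → ℝ)
    (huX : ∀ y t, uX y t = deriv (fun y => uf y t) y / deriv (fun y => X y t) y) :
    (∀ y t, Ω y t ≠ 0 →
      deriv (fun y => X y t) y
        = (U ^ 2 - 1) * (Real.sinh (Ω y t)) ^ 2
          / (Real.sqrt u₀ * (U ^ 2 + (U ^ 2 - 1) * (Real.sinh (Ω y t)) ^ 2))) ∧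
    (∀ y t, Ω y t ≠ 0 →
      uX y t = -(U ^ 3 * (u₀ - 1 / (2 * lam₁ ^ 2)))
        * rcoth (Ω y t) / (U ^ 2 + (U ^ 2 - 1) * (Real.sinh (Ω y t)) ^ 2)) ∧
    (u₀ > 1 / (2 * lam₁ ^ 2) → ∀ t,
      Tendsto (fun y => uX y t)
        (𝓝[<] ((1 / (2 * h₀)) * (u₀ - 1 / (2 * lam₁ ^ 2)) * t)) atTop ∧
      Tendsto (fun y => uX y t)
        (𝓝[>] ((1 / (2 * h₀)) * (u₀ - 1 / (2 * lam₁ ^ 2)) * t)) atBot) := by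
  have ha : 0 < Real.sqrt u₀ := Real.sqrt_pos.mpr hu₀
  have hh0 : 0 < h₀ := by rw [hh₀]; positivity
  have h2ha : 2 * h₀ * Real.sqrt u₀ = 1 := by rw [hh₀]; field_simp
  have haeq : Real.sqrt u₀ = 1 / (2 * h₀) := by
    rw [eq_div_iff (by positivity)]; linear_combination h2ha
  have hl2 : 0 < lam₁ ^ 2 := by positivity
  have hΛpos : 0 < Λ := by rw [hΛ]; exact Real.sqrt_pos.mpr (by positivity)
  have hΛh : h₀ < Λ := by
    rw [hΛ]; exact (Real.lt_sqrt hh0.le).mpr (by nlinarith)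
  have hU1 : 1 < U := by rw [hU]; exact (one_lt_div hh0).mpr hΛh
  have hΛU : Λ = U * h₀ := by rw [hU]; field_simp
  have hU0 : 0 < U := lt_trans one_pos hU1
  have hUm : 0 < U ^ 2 - 1 := by nlinarith
  set c := 1 / (2 * h₀) * (u₀ - 1 / (2 * lam₁ ^ 2)) with hc_def
  -- derivative of X in y
  have hXd : ∀ t y, Ω y t ≠ 0 →
      HasDerivAt (fun y => X y t)
        ((U ^ 2 - 1) * Real.sinh (Ω y t) ^ 2
          / (Real.sqrt u₀ * (U ^ 2 + (U ^ 2 - 1) * Real.sinh (Ω y t) ^ 2))) y := by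
    intro t y hy
    have hcont : ContinuousAt (fun y' => Ω y' t) y := by
      simp only [hΩ]; fun_prop
    have hne : ∀ᶠ y' in 𝓝 y, Ω y' t ≠ 0 := hcont.eventually_ne hy
    have hinner : HasDerivAt (fun y' : ℝ => Λ * (y' - c * t)) Λ y := by
      simpa using ((hasDerivAt_id y).sub_const (c * t)).const_mul Λ
    have hphi := (hasDerivAt_phi hU1.le (Λ * (y - c * t))).comp y hinner
    have hlin : HasDerivAt (fun y' : ℝ => y' / Real.sqrt u₀ + u₀ * t)
        (1 / Real.sqrt u₀) y := by
      simpa [one_div] using ((hasDerivAt_id y).div_const (Real.sqrt u₀)).add_const (u₀ * t)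
    have hG := hlin.add hphi
    have hXG : HasDerivAt (fun y' => X y' t)
        (1 / Real.sqrt u₀
          + -2 * U / (U ^ 2 + (U ^ 2 - 1) * Real.sinh (Λ * (y - c * t)) ^ 2) * Λ) y := by
      refine HasDerivAt.congr_of_eventuallyEq hG ?_
      filter_upwards [hne] with y' hy'
      show X y' t = _
      rw [hX, log_abs_ratio hU1.le hy', hΩ]
      simp [Function.comp]
    have hwe : Ω y t = Λ * (y - c * t) := hΩ y t
    rw [hwe]
    convert hXG using 1
    have hD := D_pos hU1.le (Λ * (y - c * t))
    rw [hΛU, haeq]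
    field_simp
    ring
  -- formula for uf
  have hufeq : ∀ y t, Ω y t ≠ 0 →
      uf y t = u₀ + 2 * U * Λ * c / (U ^ 2 + (U ^ 2 - 1) * Real.sinh (Ω y t) ^ 2) := by
    intro y t hyt
    have hcont : ContinuousAt (fun t' => Ω y t') t := by
      simp only [hΩ]; fun_prop
    have hne : ∀ᶠ t' in 𝓝 t, Ω y t' ≠ 0 := hcont.eventually_ne hyt
    have hinner : HasDerivAt (fun t' : ℝ => Λ * (y - c * t')) (-(Λ * c)) t := by
      have h1 : HasDerivAt (fun t' : ℝ => y - c * t') (-c) t := by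
        simpa using ((hasDerivAt_id t).const_mul c).const_sub y
      have := h1.const_mul Λ
      refine this.congr_deriv ?_
      ring
    have hphi := (hasDerivAt_phi hU1.le (Λ * (y - c * t))).comp t hinner
    have hlin : HasDerivAt (fun t' : ℝ => y / Real.sqrt u₀ + u₀ * t') u₀ t := by
      simpa using ((hasDerivAt_id t).const_mul u₀).const_add (y / Real.sqrt u₀)
    have hG := hlin.add hphi
    have hXt : HasDerivAt (fun t' => X y t')
        (u₀ + -2 * U / (U ^ 2 + (U ^ 2 - 1) * Real.sinh (Λ * (y - c * t)) ^ 2) * -(Λ * c)) t := by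
      refine HasDerivAt.congr_of_eventuallyEq hG ?_
      filter_upwards [hne] with t' ht'
      show X y t' = _
      rw [hX, log_abs_ratio hU1.le ht', hΩ]
      simp [Function.comp]
    rw [huf, hXt.deriv, hΩ]
    have hD := D_pos hU1.le (Λ * (y - c * t))
    field_simp
  -- derivative of uf in y
  have hufd : ∀ t y, Ω y t ≠ 0 →
      HasDerivAt (fun y => uf y t)
        (-(2 * U * Λ * c * ((U ^ 2 - 1) * (2 * Real.sinh (Ω y t) * Real.cosh (Ω y t))))
          / (U ^ 2 + (U ^ 2 - 1) * Real.sinh (Ω y t) ^ 2) ^ 2 * Λ) y := by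
    intro t y hy
    have hcont : ContinuousAt (fun y' => Ω y' t) y := by
      simp only [hΩ]; fun_prop
    have hne : ∀ᶠ y' in 𝓝 y, Ω y' t ≠ 0 := hcont.eventually_ne hy
    have hinner : HasDerivAt (fun y' : ℝ => Λ * (y' - c * t)) Λ y := by
      simpa using ((hasDerivAt_id y).sub_const (c * t)).const_mul Λ
    have hpsi := ((hasDerivAt_psi hU1.le (2 * U * Λ * c) (Λ * (y - c * t))).comp y hinner)
    have hH := hpsi.const_add u₀
    have hwe : Ω y t = Λ * (y - c * t) := hΩ y t
    rw [hwe]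
    refine HasDerivAt.congr_of_eventuallyEq hH ?_
    filter_upwards [hne] with y' hy'
    rw [hufeq y' t hy', hΩ]
    simp [Function.comp]
  -- part 2 formula
  have part2 : ∀ y t, Ω y t ≠ 0 →
      uX y t = -(U ^ 3 * (u₀ - 1 / (2 * lam₁ ^ 2)))
        * rcoth (Ω y t) / (U ^ 2 + (U ^ 2 - 1) * Real.sinh (Ω y t) ^ 2) := by
    intro y t hy
    rw [huX, (hufd t y hy).deriv, (hXd t y hy).deriv]
    have hs : Real.sinh (Ω y t) ≠ 0 := Real.sinh_ne_zero.mpr hy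
    have hD := D_pos hU1.le (Ω y t)
    rw [rcoth, hΛU, hc_def, haeq]
    field_simp
  refine ⟨fun y t hy => (hXd t y hy).deriv, part2, ?_⟩
  intro hu t
  have hK : -(U ^ 3 * (u₀ - 1 / (2 * lam₁ ^ 2))) < 0 := by
    have h3 : 0 < U ^ 3 := by positivity
    nlinarith
  constructor
  · have hw : Tendsto (fun y => Λ * (y - c * t)) (𝓝[<] (c * t)) (𝓝[<] (0 : ℝ)) := by
      rw [tendsto_nhdsWithin_iff]
      constructor
      · have hcont : Continuous fun y : ℝ => Λ * (y - c * t) := continuous_const.mul (continuous_id.sub continuous_const)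
        simpa using (hcont.tendsto (c * t)).mono_left
          (nhdsWithin_le_nhds (s := Set.Iio (c * t)))
      · filter_upwards [self_mem_nhdsWithin] with y hy
        exact Set.mem_Iio.mpr (mul_neg_of_pos_of_neg hΛpos (sub_neg.mpr hy))
    have hcomp := (tendsto_slope_left hU1.le hK).comp hw
    refine hcomp.congr' ?_
    filter_upwards [self_mem_nhdsWithin] with y hy
    have hyne : Ω y t ≠ 0 := by
      rw [hΩ]
      exact mul_ne_zero hΛpos.ne' (sub_ne_zero.mpr (ne_of_lt hy))
    rw [part2 y t hyne, hΩ]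
    simp [Function.comp]
  · have hw : Tendsto (fun y => Λ * (y - c * t)) (𝓝[>] (c * t)) (𝓝[>] (0 : ℝ)) := by
      rw [tendsto_nhdsWithin_iff]
      constructor
      · have hcont : Continuous fun y : ℝ => Λ * (y - c * t) := continuous_const.mul (continuous_id.sub continuous_const)
        simpa using (hcont.tendsto (c * t)).mono_left
          (nhdsWithin_le_nhds (s := Set.Ioi (c * t)))
      · filter_upwards [self_mem_nhdsWithin] with y hy
        exact Set.mem_Ioi.mpr (mul_pos hΛpos (sub_pos.mpr hy))
    have hcomp := (tendsto_slope_right hU1.le hK).comp hw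
    refine hcomp.congr' ?_
    filter_upwards [self_mem_nhdsWithin] with y hy
    have hyne : Ω y t ≠ 0 := by
      rw [hΩ]
      exact mul_ne_zero hΛpos.ne' (sub_ne_zero.mpr (ne_of_gt hy))
    rw [part2 y t hyne, hΩ]
    simp [Function.comp]
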